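/- With ψ the increasing fundamental solution of the OU equation (σ²/2)u'' + κ(μ−x)u' − ρu = 0, define Q_k(z) = ψ^{(k)}(z)ψ^{(k+2)}(z) − (ψ^{(k+1)}(z))². Then Q_k(z) > 0 for every z ∈ ℝ and every k ∈ ℕ₀. -/

import Mathlib

open Set MeasureTheory

/-- Parabolic cylinder function `D_α(x)` for `α < 0` (integral representation). -/
noncomputable def Dcyl (α x : ℝ) : ℝ :=
  Real.exp (-x ^ 2 / 4) / Real.Gamma (-α) *
    ∫ t in Ioi (0 : ℝ), t ^ (-α - 1) * Real.exp (-t ^ 2 / 2 - x * t)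

/-- Increasing fundamental solution of `(σ²/2)u'' + κ(μ−x)u' − ρu = 0`. -/
noncomputable def psi (κ μ σ ρ : ℝ) (x : ℝ) : ℝ :=
  Real.exp (κ * (x - μ) ^ 2 / (2 * σ ^ 2)) *
    Dcyl (-(ρ / κ)) (-((x - μ) / σ) * Real.sqrt (2 * κ))

/-- Decreasing fundamental solution of `(σ²/2)u'' + κ(μ−x)u' − ρu = 0`. -/
noncomputable def phi (κ μ σ ρ : ℝ) (x : ℝ) : ℝ :=
  Real.exp (κ * (x - μ) ^ 2 / (2 * σ ^ 2)) *
    Dcyl (-(ρ / κ)) (((x - μ) / σ) * Real.sqrt (2 * κ))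

/-- The basic integral `∫_0^∞ t^p e^{-t²/2 + Bt} dt`. -/
noncomputable def II (p B : ℝ) : ℝ :=
  ∫ t in Ioi (0 : ℝ), t ^ p * Real.exp (-t ^ 2 / 2 + B * t)

lemma II_meas (p B : ℝ) :
    AEStronglyMeasurable (fun t : ℝ => t ^ p * Real.exp (-t ^ 2 / 2 + B * t))
      (volume.restrict (Ioi 0)) := by
  apply Measurable.aestronglyMeasurable; fun_prop

lemma II_integrable (p B : ℝ) (hp : -1 < p) :
    IntegrableOn (fun t : ℝ => t ^ p * Real.exp (-t ^ 2 / 2 + B * t)) (Ioi 0) := by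
  have hg : IntegrableOn (fun t : ℝ => Real.exp ((B + 1) ^ 2 / 2) *
      (Real.exp (-t) * t ^ ((p + 1) - 1))) (Ioi 0) :=
    (Real.GammaIntegral_convergent (by linarith)).const_mul _
  refine Integrable.mono hg (II_meas p B) ?_
  filter_upwards [ae_restrict_mem measurableSet_Ioi] with t ht
  have ht0 : (0:ℝ) < t := ht
  have h1 : t ^ p * Real.exp (-t ^ 2 / 2 + B * t) ≤
      Real.exp ((B + 1) ^ 2 / 2) * (Real.exp (-t) * t ^ ((p + 1) - 1)) := by
    rw [show (p + 1) - 1 = p by ring]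
    have : Real.exp (-t ^ 2 / 2 + B * t) ≤ Real.exp ((B + 1) ^ 2 / 2) * Real.exp (-t) := by
      rw [← Real.exp_add]
      apply Real.exp_le_exp.2
      nlinarith [sq_nonneg (t - (B + 1))]
    calc t ^ p * Real.exp (-t ^ 2 / 2 + B * t)
        ≤ t ^ p * (Real.exp ((B + 1) ^ 2 / 2) * Real.exp (-t)) :=
          mul_le_mul_of_nonneg_left this (Real.rpow_nonneg ht0.le p)
      _ = Real.exp ((B + 1) ^ 2 / 2) * (Real.exp (-t) * t ^ p) := by ring
  have h2 : 0 ≤ t ^ p * Real.exp (-t ^ 2 / 2 + B * t) :=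
    mul_nonneg (Real.rpow_nonneg ht0.le p) (Real.exp_pos _).le
  rw [Real.norm_eq_abs, Real.norm_eq_abs, abs_of_nonneg h2, abs_of_nonneg (by positivity)]
  exact h1

lemma II_pos (p B : ℝ) (hp : -1 < p) : 0 < II p B := by
  rw [II, setIntegral_pos_iff_support_of_nonneg_ae ?_ (II_integrable p B hp)]
  · have hsub : Ioi (0:ℝ) ⊆
        Function.support (fun t : ℝ => t ^ p * Real.exp (-t ^ 2 / 2 + B * t)) ∩ Ioi 0 := by
      intro t ht
      exact ⟨ne_of_gt (mul_pos (Real.rpow_pos_of_pos ht p) (Real.exp_pos _)), ht⟩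
    refine lt_of_lt_of_le ?_ (measure_mono hsub)
    simp [Real.volume_Ioi]
  · filter_upwards [ae_restrict_mem measurableSet_Ioi] with t ht
    exact mul_nonneg (Real.rpow_nonneg (le_of_lt ht) p) (Real.exp_pos _).le

lemma II_hasDerivAt (p B : ℝ) (hp : -1 < p) :
    HasDerivAt (fun b => II p b) (II (p + 1) B) B := by
  have key := hasDerivAt_integral_of_dominated_loc_of_deriv_le (μ := volume.restrict (Ioi 0))
    (F := fun b t => t ^ p * Real.exp (-t ^ 2 / 2 + b * t))
    (F' := fun b t => t ^ p * (Real.exp (-t ^ 2 / 2 + b * t) * t))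
    (x₀ := B) (bound := fun t => t ^ (p + 1) * Real.exp (-t ^ 2 / 2 + (|B| + 1) * t))
    (Metric.ball_mem_nhds B one_pos)
    (Filter.Eventually.of_forall fun b => II_meas p b)
    (II_integrable p B hp)
    (by apply Measurable.aestronglyMeasurable; fun_prop)
    ?_ (II_integrable (p + 1) (|B| + 1) (by linarith)) ?_
  · have heq : ∀ t ∈ Ioi (0:ℝ),
        t ^ p * (Real.exp (-t ^ 2 / 2 + B * t) * t) =
        t ^ (p + 1) * Real.exp (-t ^ 2 / 2 + B * t) := by
      intro t ht
      rw [Real.rpow_add_one (ne_of_gt ht)]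
      ring
    have := key.2
    rw [setIntegral_congr_fun measurableSet_Ioi heq] at this
    exact this
  · filter_upwards [ae_restrict_mem measurableSet_Ioi] with t ht b hb
    have ht0 : (0:ℝ) < t := ht
    have hb' : b ≤ |B| + 1 := by
      have h := mem_ball_iff_norm.1 hb
      rw [Real.norm_eq_abs] at h
      have := abs_le.1 h.le
      linarith [this.1, this.2, le_abs_self B]
    have hnn : 0 ≤ t ^ p * (Real.exp (-t ^ 2 / 2 + b * t) * t) :=
      mul_nonneg (Real.rpow_nonneg ht0.le p) (mul_nonneg (Real.exp_pos _).le ht0.le)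
    rw [Real.norm_eq_abs, abs_of_nonneg hnn]
    have hexp : Real.exp (-t ^ 2 / 2 + b * t) ≤ Real.exp (-t ^ 2 / 2 + (|B| + 1) * t) := by
      apply Real.exp_le_exp.2
      have : b * t ≤ (|B| + 1) * t := mul_le_mul_of_nonneg_right hb' ht0.le
      linarith
    calc t ^ p * (Real.exp (-t ^ 2 / 2 + b * t) * t)
        ≤ t ^ p * (Real.exp (-t ^ 2 / 2 + (|B| + 1) * t) * t) := by
          apply mul_le_mul_of_nonneg_left _ (Real.rpow_nonneg ht0.le p)
          exact mul_le_mul_of_nonneg_right hexp ht0.le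
      _ = t ^ (p + 1) * Real.exp (-t ^ 2 / 2 + (|B| + 1) * t) := by
          rw [Real.rpow_add_one (ne_of_gt ht0)]; ring
  · filter_upwards with t b _
    have h1 : HasDerivAt (fun b : ℝ => -t ^ 2 / 2 + b * t) t b := by
      simpa using ((hasDerivAt_id b).mul_const t).const_add (-t ^ 2 / 2)
    exact (h1.exp).const_mul _

/-- Strict Cauchy–Schwarz for the moments of the positive measure
`t^p e^{-t²/2+Bt} dt` on `(0,∞)`. -/
lemma II_CS (p B : ℝ) (hp : -1 < p) : II (p + 1) B ^ 2 < II p B * II (p + 2) B := by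
  have h0 : 0 < II p B := II_pos p B hp
  have h1 : 0 < II (p + 1) B := II_pos _ _ (by linarith)
  set A0 := II p B
  set A1 := II (p + 1) B
  set A2 := II (p + 2) B
  set r := A1 / A0 with hr
  have hint0 := II_integrable p B hp
  have hint1 := II_integrable (p + 1) B (by linarith)
  have hint2 := II_integrable (p + 2) B (by linarith)
  have heq : ∀ t ∈ Ioi (0:ℝ),
      t ^ (p + 2) * Real.exp (-t ^ 2 / 2 + B * t)
        - 2 * r * (t ^ (p + 1) * Real.exp (-t ^ 2 / 2 + B * t))
        + r ^ 2 * (t ^ p * Real.exp (-t ^ 2 / 2 + B * t))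
      = t ^ p * (t - r) ^ 2 * Real.exp (-t ^ 2 / 2 + B * t) := by
    intro t ht
    have e1 : t ^ (p + 1) = t ^ p * t := Real.rpow_add_one (ne_of_gt ht) p
    have e2 : t ^ (p + 2) = t ^ p * t ^ 2 := by
      rw [show p + 2 = p + 1 + 1 by ring, Real.rpow_add_one (ne_of_gt ht), e1]
      ring
    rw [e1, e2]; ring
  have hintC : IntegrableOn
      (fun t : ℝ => t ^ p * (t - r) ^ 2 * Real.exp (-t ^ 2 / 2 + B * t)) (Ioi 0) := by
    refine Integrable.congr ((hint2.sub (hint1.const_mul (2 * r))).add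
      (hint0.const_mul (r ^ 2))) ?_
    filter_upwards [ae_restrict_mem measurableSet_Ioi] with t ht
    exact heq t ht
  have hposC : 0 < ∫ t in Ioi (0:ℝ), t ^ p * (t - r) ^ 2 * Real.exp (-t ^ 2 / 2 + B * t) := by
    rw [setIntegral_pos_iff_support_of_nonneg_ae ?_ hintC]
    · have hsub : Ioi (|r| + 1) ⊆
          Function.support (fun t : ℝ => t ^ p * (t - r) ^ 2 * Real.exp (-t ^ 2 / 2 + B * t))
            ∩ Ioi 0 := by
        intro t ht
        have ht1 : (0:ℝ) < t := lt_of_le_of_lt (by positivity) ht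
        have htr : t ≠ r := by
          have : r ≤ |r| := le_abs_self r
          intro h; rw [h] at ht; linarith [(mem_Ioi.1 ht).le, this]
        refine ⟨ne_of_gt ?_, ht1⟩
        have h2 : (0:ℝ) < (t - r) ^ 2 := by
          have : t - r ≠ 0 := sub_ne_zero.2 htr
          positivity
        exact mul_pos (mul_pos (Real.rpow_pos_of_pos ht1 p) h2) (Real.exp_pos _)
      refine lt_of_lt_of_le ?_ (measure_mono hsub)
      simp [Real.volume_Ioi]
    · filter_upwards [ae_restrict_mem measurableSet_Ioi] with t ht
      have ht0 : (0:ℝ) < t := ht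
      exact mul_nonneg (mul_nonneg (Real.rpow_nonneg ht0.le p) (sq_nonneg _))
        (Real.exp_pos _).le
  have hcomb : (∫ t in Ioi (0:ℝ), t ^ p * (t - r) ^ 2 * Real.exp (-t ^ 2 / 2 + B * t))
      = A2 - 2 * r * A1 + r ^ 2 * A0 := by
    rw [setIntegral_congr_fun measurableSet_Ioi (fun t ht => (heq t ht).symm)]
    have hg1 : Integrable
        (fun t : ℝ => 2 * r * (t ^ (p + 1) * Real.exp (-t ^ 2 / 2 + B * t)))
        (volume.restrict (Ioi 0)) := hint1.const_mul (2 * r)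
    have hg0 : Integrable
        (fun t : ℝ => r ^ 2 * (t ^ p * Real.exp (-t ^ 2 / 2 + B * t)))
        (volume.restrict (Ioi 0)) := hint0.const_mul (r ^ 2)
    have hg2 : Integrable
        (fun t : ℝ => t ^ (p + 2) * Real.exp (-t ^ 2 / 2 + B * t)
          - 2 * r * (t ^ (p + 1) * Real.exp (-t ^ 2 / 2 + B * t)))
        (volume.restrict (Ioi 0)) := hint2.sub hg1
    rw [integral_add hg2 hg0, integral_sub hint2 hg1, integral_const_mul, integral_const_mul]
    rfl
  have hkey : 0 < A2 - 2 * r * A1 + r ^ 2 * A0 := hcomb ▸ hposC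
  have hra : r * A0 = A1 := div_mul_cancel₀ _ h0.ne'
  have expand : (A2 - 2 * r * A1 + r ^ 2 * A0) * A0
      = A0 * A2 - 2 * (r * A0) * A1 + (r * A0) ^ 2 := by ring
  rw [hra] at expand
  nlinarith [mul_pos hkey h0]

/-- `ψ` as a Laplace-type integral: the Gaussian prefactors cancel. -/
lemma psi_eq (κ μ σ ρ : ℝ) (hκ : 0 < κ) (hσ : 0 < σ) (x : ℝ) :
    psi κ μ σ ρ x
      = (Real.Gamma (ρ / κ))⁻¹ * II (ρ / κ - 1) (Real.sqrt (2 * κ) / σ * (x - μ)) := by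
  rw [psi, Dcyl, II, neg_neg]
  have hJ : (∫ t in Ioi (0:ℝ),
        t ^ (ρ / κ - 1) * Real.exp (-t ^ 2 / 2 - -((x - μ) / σ) * Real.sqrt (2 * κ) * t))
      = ∫ t in Ioi (0:ℝ),
        t ^ (ρ / κ - 1) * Real.exp (-t ^ 2 / 2 + Real.sqrt (2 * κ) / σ * (x - μ) * t) := by
    congr 1
    funext t
    congr 2
    field_simp
    ring
  rw [hJ]
  have hexp : Real.exp (κ * (x - μ) ^ 2 / (2 * σ ^ 2)) *
      Real.exp (-(-((x - μ) / σ) * Real.sqrt (2 * κ)) ^ 2 / 4) = 1 := by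
    have hs : Real.sqrt (2 * κ) ^ 2 = 2 * κ := Real.sq_sqrt (by positivity)
    have hy : (-((x - μ) / σ) * Real.sqrt (2 * κ)) ^ 2 = 2 * κ * (x - μ) ^ 2 / σ ^ 2 := by
      rw [mul_pow, neg_sq, hs, div_pow]
      ring
    have hσ' : σ ≠ 0 := hσ.ne'
    rw [← Real.exp_add, Real.exp_eq_one_iff, hy]
    field_simp
    ring
  calc Real.exp (κ * (x - μ) ^ 2 / (2 * σ ^ 2)) *
        (Real.exp (-(-((x - μ) / σ) * Real.sqrt (2 * κ)) ^ 2 / 4) / Real.Gamma (ρ / κ) *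
          ∫ t in Ioi (0:ℝ),
            t ^ (ρ / κ - 1) * Real.exp (-t ^ 2 / 2 + Real.sqrt (2 * κ) / σ * (x - μ) * t))
      = (Real.exp (κ * (x - μ) ^ 2 / (2 * σ ^ 2)) *
          Real.exp (-(-((x - μ) / σ) * Real.sqrt (2 * κ)) ^ 2 / 4)) *
        ((Real.Gamma (ρ / κ))⁻¹ *
          ∫ t in Ioi (0:ℝ),
            t ^ (ρ / κ - 1) * Real.exp (-t ^ 2 / 2 + Real.sqrt (2 * κ) / σ * (x - μ) * t)) := by
        rw [div_eq_mul_inv]; ring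
    _ = _ := by rw [hexp, one_mul]

lemma iteratedDeriv_psi (κ μ σ ρ : ℝ) (hκ : 0 < κ) (hσ : 0 < σ) (hρ : 0 < ρ) (k : ℕ) :
    iteratedDeriv k (psi κ μ σ ρ) = fun x =>
      (Real.Gamma (ρ / κ))⁻¹ * (Real.sqrt (2 * κ) / σ) ^ k *
        II (ρ / κ - 1 + k) (Real.sqrt (2 * κ) / σ * (x - μ)) := by
  induction k with
  | zero =>
    funext x
    simp only [iteratedDeriv_zero, Nat.cast_zero, add_zero, pow_zero, mul_one]
    rw [psi_eq κ μ σ ρ hκ hσ x]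
  | succ k ih =>
    funext x
    rw [iteratedDeriv_succ, ih]
    have hp : -1 < ρ / κ - 1 + (k : ℝ) := by
      have h1 : 0 < ρ / κ := div_pos hρ hκ
      have h2 : (0:ℝ) ≤ (k : ℝ) := Nat.cast_nonneg k
      linarith
    have hx : HasDerivAt (fun y : ℝ => Real.sqrt (2 * κ) / σ * (y - μ))
        (Real.sqrt (2 * κ) / σ) x := by
      simpa using ((hasDerivAt_id x).sub_const μ).const_mul (Real.sqrt (2 * κ) / σ)
    have hII : HasDerivAt
        (fun y : ℝ => II (ρ / κ - 1 + (k : ℝ)) (Real.sqrt (2 * κ) / σ * (y - μ)))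
        (II (ρ / κ - 1 + (k : ℝ) + 1) (Real.sqrt (2 * κ) / σ * (x - μ)) *
          (Real.sqrt (2 * κ) / σ)) x :=
      by have h1 := (II_hasDerivAt (ρ / κ - 1 + (k : ℝ)) (Real.sqrt (2 * κ) / σ * (x - μ)) hp); exact h1.comp x hx
    have h := (hII.const_mul
      ((Real.Gamma (ρ / κ))⁻¹ * (Real.sqrt (2 * κ) / σ) ^ k)).deriv
    rw [h]
    push_cast
    rw [show ρ / κ - 1 + ((k : ℝ) + 1) = ρ / κ - 1 + (k : ℝ) + 1 by ring]
    ring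

/-- Log-convexity type inequality: `Q_k(z) = ψ^{(k)}ψ^{(k+2)} − (ψ^{(k+1)})² > 0`. -/
theorem stmt8 (κ σ ρ μ : ℝ) (hκ : 0 < κ) (hσ : 0 < σ) (hρ : 0 < ρ) :
    ∀ (k : ℕ) (z : ℝ),
      0 < iteratedDeriv k (psi κ μ σ ρ) z * iteratedDeriv (k + 2) (psi κ μ σ ρ) z
        - (iteratedDeriv (k + 1) (psi κ μ σ ρ) z) ^ 2 := by
  intro k z
  rw [iteratedDeriv_psi κ μ σ ρ hκ hσ hρ k, iteratedDeriv_psi κ μ σ ρ hκ hσ hρ (k + 2),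
    iteratedDeriv_psi κ μ σ ρ hκ hσ hρ (k + 1)]
  simp only []
  set G := (Real.Gamma (ρ / κ))⁻¹ with hG
  set c := Real.sqrt (2 * κ) / σ with hc
  set b := c * (z - μ) with hb
  set p := ρ / κ - 1 + (k : ℝ) with hpdef
  have hp : -1 < p := by
    have h1 : 0 < ρ / κ := div_pos hρ hκ
    have h2 : (0:ℝ) ≤ (k : ℝ) := Nat.cast_nonneg k
    rw [hpdef]; linarith
  have hp1 : ρ / κ - 1 + ((k : ℕ) + 1 : ℕ) = p + 1 := by push_cast [hpdef]; ring
  have hp2 : ρ / κ - 1 + ((k : ℕ) + 2 : ℕ) = p + 2 := by push_cast [hpdef]; ring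
  rw [hp1, hp2]
  have hGpos : 0 < G := by
    rw [hG]
    exact inv_pos.2 (Real.Gamma_pos_of_pos (div_pos hρ hκ))
  have hcpos : 0 < c := by rw [hc]; positivity
  have hcs := II_CS p b hp
  have hexpr : G * c ^ k * II p b * (G * c ^ (k + 2) * II (p + 2) b)
      - (G * c ^ (k + 1) * II (p + 1) b) ^ 2
      = (G * c ^ (k + 1)) ^ 2 * (II p b * II (p + 2) b - II (p + 1) b ^ 2) := by
    ring
  rw [hexpr]
  exact mul_pos (by positivity) (sub_pos.2 hcs)
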